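/- Let ĝ : ℝⁿ → ℝ be convex and E ⊂ ℝⁿ measurable such that ĝ is differentiable at a.e. x ∈ E. Then for almost every x ∈ E, limsup_{y→x} |ĝ(y) − ĝ(x) − ⟨∇ĝ(x), y−x⟩| / |y−x|² < +∞. -/

import Mathlib

open MeasureTheory Filter Set
open scoped Topology
open scoped RealInnerProductSpace

namespace AlexAux

variable {n : ℕ}

local notation "V" => EuclideanSpace ℝ (Fin n)

/-- Right directional derivative of `f` at `x` in direction `e`, as an infimum of
rational slopes. -/
noncomputable def rdir (f : V → ℝ) (e x : V) : ℝ :=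
  ⨅ q : {q : ℚ // 0 < q}, (f (x + (q : ℝ) • e) - f x) / (q : ℝ)

lemma lineConvex {f : V → ℝ} (hf : ConvexOn ℝ Set.univ f) (x e : V) :
    ConvexOn ℝ Set.univ (fun t : ℝ => f (x + t • e)) := by
  have h := hf.comp_affineMap (AffineMap.lineMap x (x + e) : ℝ →ᵃ[ℝ] V)
  have heq : (f ∘ (AffineMap.lineMap x (x + e) : ℝ →ᵃ[ℝ] V)) = fun t : ℝ => f (x + t • e) := by
    funext t
    simp [AffineMap.lineMap_apply, add_sub_cancel_left, add_comm]
  rw [heq] at h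
  simpa using h

lemma bddBelow_slopes {f : V → ℝ} (hf : ConvexOn ℝ Set.univ f) (e x : V) :
    BddBelow (Set.range fun q : {q : ℚ // 0 < q} =>
      (f (x + (q : ℝ) • e) - f x) / (q : ℝ)) := by
  have hφ := lineConvex hf x e
  refine ⟨(f (x + (0:ℝ) • e) - f (x + (-1:ℝ) • e)) / (0 - (-1)), ?_⟩
  rintro _ ⟨q, rfl⟩
  have h3 := hφ.slope_mono_adjacent (y := 0) (mem_univ (-1:ℝ)) (mem_univ ((q:ℚ):ℝ))
    (by norm_num) (by exact_mod_cast q.2)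
  simpa using h3

lemma rdir_le_slope {f : V → ℝ} (hf : ConvexOn ℝ Set.univ f) (e x : V) {t : ℝ} (ht : 0 < t) :
    rdir f e x ≤ (f (x + t • e) - f x) / t := by
  have hφ := lineConvex hf x e
  obtain ⟨q, hq0, hqt⟩ := exists_rat_btwn ht
  have hq0' : (0:ℚ) < q := by exact_mod_cast hq0
  have h1 : rdir f e x ≤ (f (x + (q:ℝ) • e) - f x) / (q:ℝ) :=
    ciInf_le (bddBelow_slopes hf e x) ⟨q, hq0'⟩
  refine h1.trans ?_
  have h2 := hφ.slope_mono (mem_univ (0:ℝ))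
    (a := (q:ℝ)) (b := t) ⟨mem_univ _, by simpa using hq0.ne'⟩
    ⟨mem_univ _, by simpa using ht.ne'⟩ hqt.le
  simpa [slope_def_field] using h2

lemma slope_le_rdir {f : V → ℝ} (hf : ConvexOn ℝ Set.univ f) (e x : V) {s : ℝ} (hs : 0 < s) :
    (f x - f (x + (-s) • e)) / s ≤ rdir f e x := by
  have hφ := lineConvex hf x e
  refine le_ciInf fun q => ?_
  have h3 := hφ.slope_mono_adjacent (y := 0) (mem_univ (-s)) (mem_univ ((q:ℚ):ℝ))
    (by linarith) (by exact_mod_cast q.2)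
  have : (f (x + (0:ℝ) • e) - f (x + (-s) • e)) / (0 - (-s))
      ≤ (f (x + ((q:ℚ):ℝ) • e) - f (x + (0:ℝ) • e)) / ((q:ℚ) - 0) := h3
  simpa using this


lemma add_smul_add_smul (x e : V) (u t : ℝ) : x + u • e + t • e = x + (u + t) • e := by
  rw [add_smul]; abel

/-- `rdir` is monotone along the line in direction `e`. -/
lemma rdir_line_monotone {f : V → ℝ} (hf : ConvexOn ℝ Set.univ f) (e x : V) :
    Monotone (fun t : ℝ => rdir f e (x + t • e)) := by
  intro u u' huu'
  rcases eq_or_lt_of_le huu' with rfl | hlt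
  · exact le_rfl
  · have h1 : rdir f e (x + u • e) ≤ (f (x + u' • e) - f (x + u • e)) / (u' - u) := by
      have := rdir_le_slope hf e (x + u • e) (t := u' - u) (by linarith)
      rw [add_smul_add_smul] at this
      have he : u + (u' - u) = u' := by ring
      rwa [he] at this
    have h2 : (f (x + u' • e) - f (x + u • e)) / (u' - u) ≤ rdir f e (x + u' • e) := by
      have := slope_le_rdir hf e (x + u' • e) (s := u' - u) (by linarith)
      rw [add_smul_add_smul] at this
      have he : u' + -(u' - u) = u := by ring
      rwa [he] at this
    exact h1.trans h2

/-- If `f` is differentiable at `x` then `rdir f e x` is the directional derivative. -/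
lemma rdir_eq_fderiv {f : V → ℝ} (hf : ConvexOn ℝ Set.univ f) (e x : V)
    (hd : DifferentiableAt ℝ f x) : rdir f e x = fderiv ℝ f x e := by
  have hφ := lineConvex hf x e
  have hline : HasDerivAt (fun t : ℝ => x + t • e) e 0 := by
    simpa using (((hasDerivAt_id (0:ℝ)).smul_const e).const_add x)
  have hder : HasDerivAt (fun t : ℝ => f (x + t • e)) (fderiv ℝ f x e) 0 := by
    have h0 : HasFDerivAt f (fderiv ℝ f x) (x + (0:ℝ) • e) := by simpa using hd.hasFDerivAt
    exact h0.comp_hasDerivAt 0 hline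
  refine le_antisymm ?_ ?_
  · have htends : Tendsto (slope (fun t : ℝ => f (x + t • e)) 0) (𝓝[>] (0:ℝ))
        (𝓝 (fderiv ℝ f x e)) := by
      refine (hasDerivAt_iff_tendsto_slope.mp hder).mono_left ?_
      exact nhdsWithin_mono 0 fun y hy => ne_of_gt hy
    refine ge_of_tendsto htends ?_
    filter_upwards [self_mem_nhdsWithin] with t (ht : 0 < t)
    have := rdir_le_slope hf e x ht
    simpa [slope_def_field] using this
  · refine le_ciInf fun q => ?_
    have hq : (0:ℝ) < (q:ℚ) := by exact_mod_cast q.2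
    have := hφ.le_slope_of_hasDerivAt (mem_univ (0:ℝ)) (mem_univ ((q:ℚ):ℝ)) hq hder
    simpa [slope_def_field] using this

lemma rdir_measurable {f : V → ℝ} (hf : Continuous f) (e : V) :
    Measurable (rdir f e) := by
  refine Measurable.iInf fun q => ?_
  exact ((hf.comp (by continuity)).sub hf).measurable.div_const _


lemma line_hasDerivAt {f : V → ℝ} {x : V} (hd : DifferentiableAt ℝ f x) (e : V) :
    HasDerivAt (fun t : ℝ => f (x + t • e)) (fderiv ℝ f x e) 0 := by
  have hline : HasDerivAt (fun t : ℝ => x + t • e) e 0 := by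
    simpa using (((hasDerivAt_id (0:ℝ)).smul_const e).const_add x)
  have h0 : HasFDerivAt f (fderiv ℝ f x) (x + (0:ℝ) • e) := by simpa using hd.hasFDerivAt
  exact h0.comp_hasDerivAt 0 hline

/-- Subgradient inequality at a point of differentiability. -/
lemma subgrad {f : V → ℝ} (hf : ConvexOn ℝ Set.univ f) {x : V}
    (hd : DifferentiableAt ℝ f x) (v : V) :
    f x + fderiv ℝ f x v ≤ f (x + v) := by
  have hφ := lineConvex hf x v
  have h := hφ.le_slope_of_hasDerivAt (mem_univ (0:ℝ)) (mem_univ (1:ℝ)) one_pos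
    (line_hasDerivAt hd v)
  simp only [slope_def_field, one_smul, zero_smul, add_zero, sub_zero, div_one] at h
  linarith

/-- The set of points near which `rdir f e` satisfies a pointwise Lipschitz bound along the
direction `e`, quantified over rationals. -/
def goodSet (f : V → ℝ) (e : V) : Set V :=
  ⋃ (C : ℚ), ⋃ (δ : ℚ), ⋃ (_ : 0 < δ),
    ⋂ (q : ℚ), ⋂ (_ : |q| < δ),
      {x | |rdir f e (x + (q : ℝ) • e) - rdir f e x| ≤ (C : ℝ) * |(q : ℝ)|}

lemma goodSet_measurableSet {f : V → ℝ} (hf : Continuous f) (e : V) :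
    MeasurableSet (goodSet f e) := by
  refine MeasurableSet.iUnion fun C => MeasurableSet.iUnion fun δ =>
    MeasurableSet.iUnion fun _ => MeasurableSet.iInter fun q =>
    MeasurableSet.iInter fun _ => ?_
  have h1 : Measurable fun x : V => |rdir f e (x + (q : ℝ) • e) - rdir f e x| :=
    (((rdir_measurable hf e).comp (by measurability)).sub (rdir_measurable hf e)).abs
  exact measurableSet_le h1 measurable_const

lemma ae_goodSet {f : V → ℝ} (hf : ConvexOn ℝ Set.univ f) (hc : Continuous f) (e : V) :
    ∀ᵐ x ∂(volume : Measure (EuclideanSpace ℝ (Fin n))), x ∈ goodSet f e := by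
  refine ae_mem_of_ae_add_linearMap_mem (LinearMap.toSpanSingleton ℝ _ e)
    (volume : Measure ℝ) volume (goodSet_measurableSet hc e) ?_
  intro p
  have hm : Monotone fun t : ℝ => rdir f e (p + t • e) := rdir_line_monotone hf e p
  filter_upwards [hm.ae_differentiableAt] with t ht
  set m : ℝ → ℝ := fun t : ℝ => rdir f e (p + t • e) with hmdef
  have hda : HasDerivAt m (deriv m t) t := ht.hasDerivAt
  set a := deriv m t
  rw [hasDerivAt_iff_isLittleO] at hda
  have hb := hda.def one_pos
  rw [Metric.eventually_nhds_iff] at hb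
  obtain ⟨ε, hε, hball⟩ := hb
  obtain ⟨C, hC⟩ := exists_rat_gt (|a| + 1)
  obtain ⟨δ, hδ0, hδε⟩ := exists_rat_btwn hε
  have hδ0' : 0 < δ := by exact_mod_cast hδ0
  simp only [goodSet, mem_iUnion, mem_iInter, mem_setOf_eq]
  refine ⟨C, δ, hδ0', fun q hq => ?_⟩
  simp only [LinearMap.toSpanSingleton_apply]
  have hqε : |(q : ℝ)| < ε := by
    have : |(q : ℝ)| < (δ : ℝ) := by exact_mod_cast hq
    linarith
  have h1 := hball (y := t + (q : ℝ)) (by simpa only [Real.dist_eq, add_sub_cancel_left] using hqε)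
  have h2 : p + t • e + (q : ℝ) • e = p + (t + (q : ℝ)) • e := add_smul_add_smul p e t (q : ℝ)
  rw [h2]
  have h3 : |m (t + (q : ℝ)) - m t - (q : ℝ) * a| ≤ |(q : ℝ)| := by
    simpa only [add_sub_cancel_left, one_mul, Real.norm_eq_abs, smul_eq_mul] using h1
  have h4 : |m (t + (q : ℝ)) - m t| ≤ (|a| + 1) * |(q : ℝ)| := by
    have := abs_sub_abs_le_abs_sub (m (t + (q : ℝ)) - m t) ((q : ℝ) * a)
    have habs : |(q : ℝ) * a| = |(q : ℝ)| * |a| := abs_mul _ _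
    nlinarith [abs_nonneg ((q : ℝ))]
  have h5 : ((|a| + 1) : ℝ) * |(q : ℝ)| ≤ (C : ℝ) * |(q : ℝ)| := by
    have : (|a| + 1 : ℝ) ≤ (C : ℝ) := hC.le
    exact mul_le_mul_of_nonneg_right this (abs_nonneg _)
  calc |m (t + (q : ℝ)) - m t| ≤ (|a| + 1) * |(q : ℝ)| := h4
    _ ≤ (C : ℝ) * |(q : ℝ)| := h5


/-- From the rational pointwise Lipschitz property, get a real one, using monotonicity. -/
lemma pointwise_lip {f : V → ℝ} (hf : ConvexOn ℝ Set.univ f) (e : V) {x : V}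
    (hx : x ∈ goodSet f e) :
    ∃ C δ : ℝ, 0 ≤ C ∧ 0 < δ ∧ ∀ t : ℝ, |t| < δ →
      |rdir f e (x + t • e) - rdir f e x| ≤ C * |t| := by
  simp only [goodSet, mem_iUnion, mem_iInter, mem_setOf_eq] at hx
  obtain ⟨C, δ, hδ, H⟩ := hx
  set m : ℝ → ℝ := fun t : ℝ => rdir f e (x + t • e) with hmdef
  have hm : Monotone m := rdir_line_monotone hf e x
  have hm0 : m 0 = rdir f e x := by simp [hmdef]
  have H' : ∀ q : ℚ, |(q : ℝ)| < (δ : ℝ) → |m (q : ℝ) - m 0| ≤ (C : ℝ) * |(q : ℝ)| := by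
    intro q hq
    rw [hm0]
    exact H q (by exact_mod_cast hq)
  have hδ' : (0 : ℝ) < (δ : ℝ) := by exact_mod_cast hδ
  have hC0 : (0 : ℝ) ≤ (C : ℝ) := by
    have h1 := H' (δ/2) (by push_cast; rw [abs_of_pos (by linarith)]; linarith)
    have h2 : (0:ℝ) ≤ |m ((δ/2 : ℚ) : ℝ) - m 0| := abs_nonneg _
    have h3 : |((δ/2 : ℚ) : ℝ)| = (δ : ℝ)/2 := by push_cast; rw [abs_of_pos]; linarith
    rw [h3] at h1
    nlinarith
  refine ⟨2 * (C : ℝ), (δ : ℝ)/2, by linarith, by linarith, ?_⟩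
  intro t ht
  rw [← hm0]
  show |m t - m 0| ≤ 2 * (C : ℝ) * |t|
  rcases lt_trichotomy t 0 with htn | rfl | htp
  · have habs : |t| = -t := abs_of_neg htn
    rw [habs] at ht
    obtain ⟨q, hq1, hq2⟩ := exists_rat_btwn (show t < t/2 by linarith)
    obtain ⟨q', hq1', hq2'⟩ := exists_rat_btwn (show 2*t < t by linarith)
    have hq0 : ((q:ℚ):ℝ) < 0 := by linarith
    have hqa : |((q:ℚ):ℝ)| = -(q:ℝ) := abs_of_neg hq0
    have hq'0 : ((q':ℚ):ℝ) < 0 := by linarith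
    have hq'a : |((q':ℚ):ℝ)| = -(q':ℝ) := abs_of_neg hq'0
    have hbq := H' q (by rw [hqa]; linarith)
    have hbq' := H' q' (by rw [hq'a]; linarith)
    rw [hqa] at hbq; rw [hq'a] at hbq'
    have hmono1 : m t ≤ m (q:ℝ) := hm hq1.le
    have hmono2 : m (q':ℝ) ≤ m t := hm hq2'.le
    have e1 : m (q:ℝ) - m 0 ≤ (C:ℝ) * (-(q:ℝ)) := (abs_le.mp hbq).2
    have e2 : -((C:ℝ) * (-(q':ℝ))) ≤ m (q':ℝ) - m 0 := (abs_le.mp hbq').1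
    rw [abs_le]
    constructor
    · nlinarith
    · nlinarith
  · simp
  · have habs : |t| = t := abs_of_pos htp
    rw [habs] at ht
    obtain ⟨q, hq1, hq2⟩ := exists_rat_btwn (show t < 2*t by linarith)
    obtain ⟨q', hq1', hq2'⟩ := exists_rat_btwn (show (0:ℝ) < t by exact htp)
    have hq0 : (0:ℝ) < ((q:ℚ):ℝ) := by linarith
    have hqa : |((q:ℚ):ℝ)| = (q:ℝ) := abs_of_pos hq0
    have hq'0 : (0:ℝ) < ((q':ℚ):ℝ) := by linarith
    have hq'a : |((q':ℚ):ℝ)| = (q':ℝ) := abs_of_pos hq'0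
    have hbq := H' q (by rw [hqa]; linarith)
    have hbq' := H' q' (by rw [hq'a]; linarith)
    rw [hqa] at hbq; rw [hq'a] at hbq'
    have hmono1 : m t ≤ m (q:ℝ) := hm hq1.le
    have hmono2 : m (q':ℝ) ≤ m t := hm hq2'.le
    have e1 : m (q:ℝ) - m 0 ≤ (C:ℝ) * ((q:ℝ)) := (abs_le.mp hbq).2
    have e2 : -((C:ℝ) * ((q':ℝ))) ≤ m (q':ℝ) - m 0 := (abs_le.mp hbq').1
    rw [abs_le]
    constructor
    · nlinarith
    · nlinarith

/-- The key pointwise quadratic upper bound. -/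
lemma quad_bound {f : V → ℝ} (hf : ConvexOn ℝ Set.univ f) (e : V) {x : V}
    (hd : DifferentiableAt ℝ f x) {C δ : ℝ} (hC : 0 ≤ C) (hδ : 0 < δ)
    (hlip : ∀ t : ℝ, |t| < δ → |rdir f e (x + t • e) - rdir f e x| ≤ C * |t|) :
    ∀ t : ℝ, |t| < δ → f (x + t • e) - f x - t * fderiv ℝ f x e ≤ C * t^2 := by
  intro t ht
  have key : f (x + t • e) - f x ≤ t * rdir f e (x + t • e) := by
    rcases lt_trichotomy t 0 with h | rfl | h
    · have h1 := rdir_le_slope hf e (x + t • e) (t := -t) (by linarith)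
      rw [add_smul_add_smul] at h1
      have he : t + -t = 0 := by ring
      rw [he] at h1
      simp only [zero_smul, add_zero] at h1
      rw [le_div_iff₀ (by linarith : (0:ℝ) < -t)] at h1
      nlinarith
    · simp
    · have h1 := slope_le_rdir hf e (x + t • e) (s := t) h
      rw [add_smul_add_smul] at h1
      have he : t + -t = 0 := by ring
      rw [he] at h1
      simp only [zero_smul, add_zero] at h1
      rw [div_le_iff₀ h] at h1
      nlinarith
  have h2 : |rdir f e (x + t • e) - rdir f e x| ≤ C * |t| := hlip t ht
  have h3 : rdir f e x = fderiv ℝ f x e := rdir_eq_fderiv hf e x hd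
  have h4 : t * (rdir f e (x + t • e) - rdir f e x) ≤ |t| * (C * |t|) := by
    calc t * (rdir f e (x + t • e) - rdir f e x)
        ≤ |t * (rdir f e (x + t • e) - rdir f e x)| := le_abs_self _
      _ = |t| * |rdir f e (x + t • e) - rdir f e x| := abs_mul _ _
      _ ≤ |t| * (C * |t|) := mul_le_mul_of_nonneg_left h2 (abs_nonneg t)
  have habs : |t| * |t| = t^2 := by rw [← abs_mul, abs_mul_self]; ring
  have h5 : |t| * (C * |t|) = C * t^2 := by rw [← habs]; ring
  have h6 : t * fderiv ℝ f x e = t * rdir f e x := by rw [h3]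
  rw [mul_sub, h5] at h4
  linarith


lemma coord_abs_le_norm (v : V) (i : Fin n) : |v i| ≤ ‖v‖ := by
  rw [EuclideanSpace.norm_eq]
  rw [← Real.sqrt_sq_eq_abs]
  apply Real.sqrt_le_sqrt
  have : |v i| ^ 2 = ‖v i‖ ^ 2 := by rw [Real.norm_eq_abs]
  rw [← sq_abs]
  rw [this]
  exact Finset.single_le_sum (f := fun j => ‖v j‖ ^ 2) (fun j _ => sq_nonneg _)
    (Finset.mem_univ i)

lemma norm_sq_eq_sum (v : V) : ‖v‖ ^ 2 = ∑ i, (v i) ^ 2 := by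
  rw [EuclideanSpace.norm_eq, Real.sq_sqrt (by positivity)]
  refine Finset.sum_congr rfl fun i _ => ?_
  rw [Real.norm_eq_abs, sq_abs]

lemma decomp (v : V) : ∑ i, v i • (EuclideanSpace.single i (1:ℝ) : V) = v := by
  have h := (EuclideanSpace.basisFun (Fin n) ℝ).sum_repr v
  simpa [EuclideanSpace.basisFun_apply, EuclideanSpace.basisFun_repr] using h

end AlexAux

open AlexAux

theorem alexandroff_limsup_bound (n : ℕ) (ghat : EuclideanSpace ℝ (Fin n) → ℝ)
    (hghat : ConvexOn ℝ Set.univ ghat)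
    (E : Set (EuclideanSpace ℝ (Fin n))) (hE : MeasurableSet E)
    (hdiff : ∀ᵐ x ∂(volume.restrict E), DifferentiableAt ℝ ghat x) :
    ∀ᵐ x ∂(volume.restrict E), ∃ C : ℝ, ∃ δ : ℝ, 0 < δ ∧
      ∀ y : EuclideanSpace ℝ (Fin n), dist y x < δ →
        |ghat y - ghat x - ⟪gradient ghat x, y - x⟫| ≤ C * dist y x ^ 2 := by
  classical
  rcases Nat.eq_zero_or_pos n with hn | hn
  · subst hn
    filter_upwards with x
    refine ⟨0, 1, one_pos, fun y _ => ?_⟩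
    have hxy : y = x := Subsingleton.elim y x
    subst hxy
    simp
  · haveI : Nonempty (Fin n) := ⟨⟨0, hn⟩⟩
    have hn' : ((n : ℝ)) ≠ 0 := Nat.cast_ne_zero.mpr hn.ne'
    have hn0 : (0 : ℝ) < (n : ℝ) := Nat.cast_pos.mpr hn
    have hcont : Continuous ghat := by
      rw [← continuousOn_univ]
      exact hghat.continuousOn isOpen_univ
    set e : Fin n → EuclideanSpace ℝ (Fin n) := fun i => EuclideanSpace.single i (1:ℝ) with he
    have hae : ∀ᵐ x ∂(volume.restrict E), ∀ i : Fin n, x ∈ goodSet ghat (e i) := by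
      rw [MeasureTheory.ae_all_iff]
      intro i
      exact ae_restrict_of_ae (ae_goodSet hghat hcont (e i))
    filter_upwards [hdiff, hae] with x hx hgood
    have hex : ∀ i : Fin n, ∃ C : ℝ, ∃ δ : ℝ, 0 ≤ C ∧ 0 < δ ∧ ∀ t : ℝ, |t| < δ →
        ghat (x + t • e i) - ghat x - t * fderiv ℝ ghat x (e i) ≤ C * t^2 := by
      intro i
      obtain ⟨C, δ, hC, hδ, hlip⟩ := pointwise_lip hghat (e i) (hgood i)
      exact ⟨C, δ, hC, hδ, quad_bound hghat (e i) hx hC hδ hlip⟩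
    choose Cf δf hCf hδf hQ using hex
    set Cmax : ℝ := Finset.univ.sup' Finset.univ_nonempty Cf with hCmax
    set δmin : ℝ := Finset.univ.inf' Finset.univ_nonempty δf with hδmin
    have hδminpos : 0 < δmin := by
      rw [hδmin, Finset.lt_inf'_iff]
      exact fun i _ => hδf i
    have hCmax0 : 0 ≤ Cmax := by
      refine le_trans (hCf (Classical.arbitrary (Fin n))) ?_
      exact Finset.le_sup' Cf (Finset.mem_univ _)
    refine ⟨(n : ℝ) * Cmax, δmin / n, by positivity, fun y hy => ?_⟩
    set v : EuclideanSpace ℝ (Fin n) := y - x with hv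
    have hxv : x + v = y := by rw [hv]; abel
    have hnv : ‖v‖ < δmin / n := by
      rw [hv, ← dist_eq_norm]; exact hy
    have glem : ∀ w : EuclideanSpace ℝ (Fin n),
        ⟪gradient ghat x, w⟫ = fderiv ℝ ghat x w := by
      intro w
      rw [hx.hasGradientAt.hasFDerivAt.fderiv]
      simp [InnerProductSpace.toDual_apply_apply]
    have hlow : 0 ≤ ghat y - ghat x - ⟪gradient ghat x, y - x⟫ := by
      have := subgrad hghat hx v
      rw [hxv] at this
      rw [glem]
      linarith
    -- convexity of the recentered function
    set h : EuclideanSpace ℝ (Fin n) → ℝ :=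
      fun w => ghat (x + w) - ghat x - fderiv ℝ ghat x w with hh
    have hconv : ConvexOn ℝ Set.univ h := by
      refine ⟨convex_univ, ?_⟩
      intro u _ w _ a b ha hb hab
      have h1 : a • (x + u) + b • (x + w) = x + (a • u + b • w) := by
        rw [smul_add, smul_add]
        have h2 : a • x + b • x = x := by rw [← add_smul, hab, one_smul]
        calc a • x + a • u + (b • x + b • w)
            = (a • x + b • x) + (a • u + b • w) := by abel
          _ = x + (a • u + b • w) := by rw [h2]
      have h2 := hghat.2 (Set.mem_univ (x + u)) (Set.mem_univ (x + w)) ha hb hab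
      rw [h1] at h2
      have h3 : fderiv ℝ ghat x (a • u + b • w)
          = a * fderiv ℝ ghat x u + b * fderiv ℝ ghat x w := by
        rw [ContinuousLinearMap.map_add, (fderiv ℝ ghat x).map_smul,
          (fderiv ℝ ghat x).map_smul]
        rfl
      simp only [hh, smul_eq_mul] at h2 ⊢
      rw [h3]
      have hgx : a * ghat x + b * ghat x = ghat x := by rw [← add_mul, hab, one_mul]
      linarith
    have hterm : ∀ i : Fin n, h (((n:ℝ) * v i) • e i) ≤ Cmax * ((n:ℝ) * v i)^2 := by
      intro i
      have hsmall : |(n:ℝ) * v i| < δf i := by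
        rw [abs_mul, abs_of_nonneg hn0.le]
        have h1 : |v i| ≤ ‖v‖ := coord_abs_le_norm v i
        have h2 : (n:ℝ) * |v i| ≤ (n:ℝ) * ‖v‖ := by nlinarith
        have h3 : (n:ℝ) * ‖v‖ < δmin := by
          rw [lt_div_iff₀ hn0] at hnv; linarith [hnv]
        have h4 : δmin ≤ δf i := Finset.inf'_le δf (Finset.mem_univ i)
        linarith
      have hq := hQ i ((n:ℝ) * v i) hsmall
      have hf : fderiv ℝ ghat x (((n:ℝ) * v i) • e i)
          = ((n:ℝ) * v i) * fderiv ℝ ghat x (e i) := by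
        rw [(fderiv ℝ ghat x).map_smul]; rfl
      have hCle : Cf i ≤ Cmax := Finset.le_sup' Cf (Finset.mem_univ i)
      have : h (((n:ℝ) * v i) • e i) ≤ Cf i * ((n:ℝ) * v i)^2 := by
        rw [hh]; simp only; rw [hf]; exact hq
      refine this.trans ?_
      exact mul_le_mul_of_nonneg_right hCle (sq_nonneg _)
    have hsum : ∑ i, ((1:ℝ)/n) • (((n:ℝ) * v i) • e i) = v := by
      have hterm' : ∀ i : Fin n, ((1:ℝ)/n) • (((n:ℝ) * v i) • e i) = v i • e i := by
        intro i; rw [smul_smul]; congr 1; field_simp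
      rw [Finset.sum_congr rfl fun i _ => hterm' i]
      exact decomp v
    have hJ := hconv.map_sum_le (t := Finset.univ) (w := fun _ => (1:ℝ)/n)
        (p := fun i => ((n:ℝ) * v i) • e i) (fun i _ => by positivity)
        (by rw [Finset.sum_const, Finset.card_univ, Fintype.card_fin, nsmul_eq_mul]; field_simp)
        (fun i _ => Set.mem_univ _)
    rw [hsum] at hJ
    have hstep : ∑ i, ((1:ℝ)/n) • h (((n:ℝ) * v i) • e i)
        ≤ ∑ i, ((1:ℝ)/n) * (Cmax * ((n:ℝ) * v i)^2) := by
      refine Finset.sum_le_sum fun i _ => ?_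
      rw [smul_eq_mul]
      exact mul_le_mul_of_nonneg_left (hterm i) (by positivity)
    have hsum2 : ∑ i, ((1:ℝ)/n) * (Cmax * ((n:ℝ) * v i)^2)
        = (n:ℝ) * Cmax * ∑ i, (v i)^2 := by
      rw [Finset.mul_sum]
      refine Finset.sum_congr rfl fun i _ => ?_
      field_simp
    have hnormsq : ∑ i, (v i)^2 = ‖v‖^2 := (norm_sq_eq_sum v).symm
    have hfinal : h v ≤ (n:ℝ) * Cmax * ‖v‖^2 := by
      rw [← hnormsq]
      calc h v ≤ ∑ i, ((1:ℝ)/n) • h (((n:ℝ) * v i) • e i) := hJ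
        _ ≤ ∑ i, ((1:ℝ)/n) * (Cmax * ((n:ℝ) * v i)^2) := hstep
        _ = (n:ℝ) * Cmax * ∑ i, (v i)^2 := hsum2
    rw [abs_of_nonneg hlow, dist_eq_norm]
    have hhv : h v = ghat y - ghat x - ⟪gradient ghat x, y - x⟫ := by
      rw [hh]; simp only; rw [hxv, glem]
    rw [← hhv, ← hv]
    exact hfinal
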